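/- Let f(z) = Σ a_j z^j ∈ ℂ[z] of degree n ≥ 1 with f(0) ≠ 0, f*(z) = Σ conj(a_{n-j}) z^j, and f₁(z) = (f*(0)f(z) − f(0)f*(z))/z. If |f*(0)| > |f(0)| and all zeros of f₁ lie in the closed unit disc (or f₁ is a nonzero constant), then all zeros of f lie in the closed unit disc. -/

import Mathlib

open Polynomial

private lemma rev_eval (p : Polynomial ℂ) (z : ℂ) (hz : z ≠ 0) :
    p.reverse.eval z = z ^ p.natDegree * p.eval z⁻¹ := by
  have hz' : z⁻¹ ≠ 0 := inv_ne_zero hz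
  have : Invertible (z⁻¹) := invertibleOfNonzero hz'
  have h := Polynomial.eval₂_reverse_mul_pow (RingHom.id ℂ) (z⁻¹) p
  rw [invOf_eq_right_inv (mul_inv_cancel₀ hz'), inv_inv] at h
  rw [eval₂_eq_eval_map, eval₂_eq_eval_map, Polynomial.map_id] at h
  rw [Polynomial.map_id] at h
  rw [← h, mul_comm, mul_assoc, ← mul_pow, inv_mul_cancel₀ hz, one_pow, mul_one]

private lemma conj_eval (p : Polynomial ℂ) (w : ℂ) :
    (p.map (starRingEnd ℂ)).eval ((starRingEnd ℂ) w) = (starRingEnd ℂ) (p.eval w) := by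
  rw [eval_map]
  exact Polynomial.eval₂_hom (starRingEnd ℂ) w

private lemma aux_abs (z r : ℂ) (hz : 1 ≤ ‖z‖) (hr : ‖r‖ ≤ 1) :
    ‖1 - r * (starRingEnd ℂ) z‖ ≤ ‖z - r‖ := by
  have h1 : Complex.normSq z ≥ 1 := by
    have := Complex.sq_norm z
    nlinarith [norm_nonneg z]
  have h2 : Complex.normSq r ≤ 1 := by
    have := Complex.sq_norm r
    nlinarith [norm_nonneg r]
  have key : Complex.normSq (1 - r * (starRingEnd ℂ) z) ≤ Complex.normSq (z - r) := by
    simp only [Complex.normSq_apply, Complex.sub_re, Complex.sub_im, Complex.mul_re,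
      Complex.mul_im, Complex.one_re, Complex.one_im, Complex.conj_re, Complex.conj_im] at *
    nlinarith [h1, h2]
  calc ‖1 - r * (starRingEnd ℂ) z‖ = Real.sqrt (Complex.normSq (1 - r * (starRingEnd ℂ) z)) := Complex.norm_def _
    _ ≤ Real.sqrt (Complex.normSq (z - r)) := Real.sqrt_le_sqrt key
    _ = ‖z - r‖ := (Complex.norm_def _).symm

/-- If all roots of `p` lie in the closed unit disc and `|z| > 1`, then
`|p*(z)| ≤ |p(z)|`. -/
private lemma rev_abs_le (p : Polynomial ℂ) (hp : ∀ r : ℂ, p.IsRoot r → ‖r‖ ≤ 1)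
    (z : ℂ) (hz : 1 < ‖z‖) :
    ‖((p.map (starRingEnd ℂ)).reverse).eval z‖ ≤ ‖p.eval z‖ := by
  rcases eq_or_ne p 0 with rfl | hp0
  · simp
  have hz0 : z ≠ 0 := by
    intro h; rw [h] at hz; simp at hz; linarith
  set n := p.natDegree with hn
  have hmapdeg : (p.map (starRingEnd ℂ)).natDegree = n :=
    Polynomial.natDegree_map (starRingEnd ℂ)
  have hcard : Multiset.card p.roots = n :=
    Polynomial.splits_iff_card_roots.mp (IsAlgClosed.splits p)
  have hfact := Polynomial.C_leadingCoeff_mul_prod_multiset_X_sub_C (p := p) hcard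
  -- eval of p at any point
  have heval : ∀ w : ℂ, ‖p.eval w‖
      = ‖p.leadingCoeff‖ * ((p.roots.map fun r => ‖w - r‖).prod) := by
    intro w
    conv_lhs => rw [← hfact]
    rw [eval_mul, eval_C, norm_mul]
    congr 1
    rw [eval_multiset_prod, show ∀ m : Multiset ℂ, ‖m.prod‖ = (m.map (fun x => ‖x‖)).prod from fun m => (Multiset.prod_hom m (normHom : ℂ →*₀ ℝ)).symm]
    congr 1
    rw [Multiset.map_map, Multiset.map_map]
    congr 1
    ext r
    simp
  -- LHS computation
  have hzc : (starRingEnd ℂ) z ≠ 0 := by simpa using hz0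
  have hzcinv : ((starRingEnd ℂ) z)⁻¹ ≠ 0 := inv_ne_zero hzc
  have hL : ‖((p.map (starRingEnd ℂ)).reverse).eval z‖
      = ‖z‖ ^ n * ‖p.eval (((starRingEnd ℂ) z)⁻¹)‖ := by
    rw [rev_eval _ z hz0, hmapdeg, norm_mul, norm_pow]
    congr 1
    have : z⁻¹ = (starRingEnd ℂ) (((starRingEnd ℂ) z)⁻¹) := by
      rw [map_inv₀]; simp
    rw [this, conj_eval]
    exact Complex.norm_conj _
  rw [hL, heval, heval]
  have habsz : (0:ℝ) < ‖z‖ := by linarith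
  -- |z|^n = prod over roots of |z|
  have hpow : ‖z‖ ^ n = (p.roots.map fun _ => ‖z‖).prod := by
    rw [Multiset.map_const', Multiset.prod_replicate, hcard]
  have hrw : ‖z‖ ^ n * (‖p.leadingCoeff‖
      * (p.roots.map fun r => ‖((starRingEnd ℂ) z)⁻¹ - r‖).prod)
      = ‖p.leadingCoeff‖
        * (p.roots.map fun r => ‖z‖ * ‖((starRingEnd ℂ) z)⁻¹ - r‖).prod := by
    rw [Multiset.prod_map_mul, hpow]; ring
  rw [hrw]
  apply mul_le_mul_of_nonneg_left _ (norm_nonneg _)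
  apply Multiset.prod_map_le_prod_map₀
  · intro r _; positivity
  · intro r hr
    have hr1 : ‖r‖ ≤ 1 := hp r (Polynomial.isRoot_of_mem_roots hr)
    have : ‖z‖ * ‖((starRingEnd ℂ) z)⁻¹ - r‖
        = ‖1 - r * (starRingEnd ℂ) z‖ := by
      rw [← Complex.norm_conj z, ← norm_mul]
      congr 1
      field_simp
    rw [this]
    exact aux_abs z r (le_of_lt hz) hr1

/-- One direction of the Schur–Cohn criterion: if `|f*(0)| > |f(0)|` and all
zeros of `f₁` lie in the closed unit disc (or `f₁` is a nonzero constant), then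
all zeros of `f` lie in the closed unit disc. -/
theorem schur_cohn (f : Polynomial ℂ) (hdeg : 1 ≤ f.natDegree)
    (h0 : f.eval 0 ≠ 0)
    (fstar : Polynomial ℂ) (hstar : fstar = (f.map (starRingEnd ℂ)).reverse)
    (f₁ : Polynomial ℂ)
    (hf₁ : Polynomial.X * f₁ = Polynomial.C (fstar.eval 0) * f
        - Polynomial.C (f.eval 0) * fstar)
    (habs : ‖f.eval 0‖ < ‖fstar.eval 0‖)
    (hroots : (∀ z : ℂ, f₁.eval z = 0 → ‖z‖ ≤ 1) ∨ f₁.degree = 0) :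
    ∀ z : ℂ, f.eval z = 0 → ‖z‖ ≤ 1 := by
  -- reduce the disjunction
  have Hroots : ∀ w : ℂ, f₁.eval w = 0 → ‖w‖ ≤ 1 := by
    rcases hroots with h | h
    · exact h
    · intro w hw
      exfalso
      have hc := Polynomial.eq_C_of_degree_le_zero (le_of_eq h)
      rw [hc, eval_C] at hw
      have : f₁ ≠ 0 := fun h0' => by simp [h0'] at h
      rw [hc] at this
      exact this (by rw [hw]; simp)
  intro z hfz
  by_contra hgt
  push_neg at hgt
  have hz0 : z ≠ 0 := by
    intro h; rw [h] at hgt; simp at hgt; linarith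
  set n := f.natDegree with hn
  set a₀ := f.eval 0 with ha₀
  set A := fstar.eval 0 with hA
  set h := X * f₁ with hh
  -- roots of h are in the closed disc
  have hroots_h : ∀ r : ℂ, h.IsRoot r → ‖r‖ ≤ 1 := by
    intro r hr
    simp only [hh, IsRoot, eval_mul, eval_X, mul_eq_zero] at hr
    rcases hr with rfl | hr
    · simp
    · exact Hroots r hr
  -- degree facts
  have hmapdeg : (f.map (starRingEnd ℂ)).natDegree = n := Polynomial.natDegree_map _
  have hfstar_coeff_n : fstar.coeff n = (starRingEnd ℂ) a₀ := by
    rw [hstar, Polynomial.coeff_reverse, hmapdeg]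
    rw [Polynomial.revAt_le (le_refl n), Nat.sub_self, Polynomial.coeff_map]
    simp [ha₀, ← Polynomial.coeff_zero_eq_eval_zero]
  have hA_eq : A = (starRingEnd ℂ) (f.coeff n) := by
    rw [hA, hstar, ← Polynomial.coeff_zero_eq_eval_zero, Polynomial.coeff_reverse, hmapdeg]
    rw [Polynomial.revAt_le (Nat.zero_le n), Nat.sub_zero, Polynomial.coeff_map]
  have habsA : ‖A‖ = ‖f.coeff n‖ := by
    rw [hA_eq]; exact Complex.norm_conj _
  -- coefficient n of h
  have hcoeff_n : h.coeff n = (Complex.normSq (f.coeff n) - Complex.normSq a₀ : ℝ) := by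
    rw [hf₁]
    rw [Polynomial.coeff_sub, Polynomial.coeff_C_mul, Polynomial.coeff_C_mul,
      hfstar_coeff_n, hA_eq]
    rw [mul_comm ((starRingEnd ℂ) (f.coeff n)) (f.coeff n)]
    rw [Complex.mul_conj, Complex.mul_conj]
    push_cast
    ring
  have hnormsq_lt : Complex.normSq a₀ < Complex.normSq (f.coeff n) := by
    have h1 := Complex.sq_norm a₀
    have h2 := Complex.sq_norm (f.coeff n)
    rw [habsA] at habs
    nlinarith [norm_nonneg a₀, norm_nonneg (f.coeff n)]
  have hcoeff_ne : h.coeff n ≠ 0 := by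
    rw [hcoeff_n]
    intro hc
    rw [Complex.ofReal_eq_zero] at hc
    linarith
  have hdeg_le : h.natDegree ≤ n := by
    rw [hf₁]
    apply le_trans (Polynomial.natDegree_sub_le _ _)
    apply max_le
    · exact le_trans (Polynomial.natDegree_C_mul_le _ _) (le_refl n)
    · apply le_trans (Polynomial.natDegree_C_mul_le _ _)
      rw [hstar]
      exact le_trans (Polynomial.reverse_natDegree_le _) (le_of_eq hmapdeg)
  have hdeg_h : h.natDegree = n :=
    le_antisymm hdeg_le (Polynomial.le_natDegree_of_ne_zero hcoeff_ne)
  -- evaluations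
  have hzc : (starRingEnd ℂ) z ≠ 0 := by simpa using hz0
  have hzcinv := inv_ne_zero hzc
  -- fstar at (conj z)⁻¹ is 0
  have hfstar_at : fstar.eval (((starRingEnd ℂ) z)⁻¹) = 0 := by
    rw [hstar, rev_eval _ _ hzcinv, inv_inv]
    have : (f.map (starRingEnd ℂ)).eval ((starRingEnd ℂ) z) = (starRingEnd ℂ) (f.eval z) := by
      rw [eval_map]; exact Polynomial.eval₂_hom _ _
    rw [this, hfz]
    simp
  -- h at (conj z)⁻¹
  have hh_at : h.eval (((starRingEnd ℂ) z)⁻¹) = A * f.eval (((starRingEnd ℂ) z)⁻¹) := by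
    rw [hf₁]
    simp [hfstar_at]
  -- fstar at z
  have hfstar_z : ‖fstar.eval z‖
      = ‖z‖ ^ n * ‖f.eval (((starRingEnd ℂ) z)⁻¹)‖ := by
    rw [hstar, rev_eval _ z hz0, hmapdeg, norm_mul, norm_pow]
    congr 1
    have : z⁻¹ = (starRingEnd ℂ) (((starRingEnd ℂ) z)⁻¹) := by rw [map_inv₀]; simp
    rw [this]
    rw [show (f.map (starRingEnd ℂ)).eval ((starRingEnd ℂ) (((starRingEnd ℂ) z)⁻¹))
        = (starRingEnd ℂ) (f.eval (((starRingEnd ℂ) z)⁻¹)) from by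
      rw [eval_map]; exact Polynomial.eval₂_hom _ _]
    exact Complex.norm_conj _
  -- h* at z
  have hhstar_z : ‖((h.map (starRingEnd ℂ)).reverse).eval z‖
      = ‖z‖ ^ n * (‖A‖ * ‖f.eval (((starRingEnd ℂ) z)⁻¹)‖) := by
    rw [rev_eval _ z hz0, Polynomial.natDegree_map, hdeg_h, norm_mul, norm_pow]
    congr 1
    have : z⁻¹ = (starRingEnd ℂ) (((starRingEnd ℂ) z)⁻¹) := by rw [map_inv₀]; simp
    rw [this]
    rw [show (h.map (starRingEnd ℂ)).eval ((starRingEnd ℂ) (((starRingEnd ℂ) z)⁻¹))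
        = (starRingEnd ℂ) (h.eval (((starRingEnd ℂ) z)⁻¹)) from by
      rw [eval_map]; exact Polynomial.eval₂_hom _ _]
    rw [Complex.norm_conj, hh_at, norm_mul]
  -- h at z
  have hh_z : ‖h.eval z‖ = ‖a₀‖ * ‖fstar.eval z‖ := by
    rw [hf₁]
    simp only [eval_sub, eval_mul, eval_C, hfz, mul_zero, zero_sub, norm_neg, norm_mul]
  -- key inequality
  have hkey := rev_abs_le h hroots_h z hgt
  rw [hhstar_z, hh_z, hfstar_z] at hkey
  have habsz_pos : (0:ℝ) < ‖z‖ ^ n := by positivity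
  set t := ‖f.eval (((starRingEnd ℂ) z)⁻¹)‖ with ht
  have htnn : (0:ℝ) ≤ t := by rw [ht]; exact norm_nonneg _
  rcases eq_or_lt_of_le htnn with h0t | h0t
  · -- t = 0 : then f₁ z = 0
    have hfz' : fstar.eval z = 0 := by
      have : ‖fstar.eval z‖ = 0 := by rw [hfstar_z, ← h0t, mul_zero]
      exact norm_eq_zero.mp this
    have hhz0 : h.eval z = 0 := by
      rw [hf₁]; simp [hfz, hfz']
    have hmul : z * f₁.eval z = 0 := by
      rw [show z * f₁.eval z = h.eval z from by rw [hh]; simp, hhz0]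
    have hf₁z : f₁.eval z = 0 := by
      rcases mul_eq_zero.mp hmul with h' | h'
      · exact absurd h' hz0
      · exact h'
    linarith [Hroots z hf₁z]
  · -- t > 0 : contradiction with |a₀| < |A|
    nlinarith [hkey, mul_pos habsz_pos h0t, habs]
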